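/- arXiv:1310.8442 — 3 statements merged into one kernel-verified Lean document; each statement's English description precedes it below -/
import Mathlib

section
/- Let t ≥ 3 be an integer and let H be the 3-uniform hypergraph on vertex set [t+1] with edge set [t]^{(3)} ∪ { {i_1, i_2, t+1} : {i_1,i_2} ∈ [t-1]^{(2)} } ∪ { {1, t, t+1} }. Then λ(H) > λ([t]^{(3)}) = (t-1)(t-2)/(6t²). In particular, the legal weighting x with x_1 = … = x_{t-1} = 1/t and x_t = x_{t+1} = 1/(2t) satisfies λ(H, x) > λ([t]^{(3)}). -/
open Finset

/-- λ(G,x) = Σ_{e∈E} ∏_{i∈e} x_i for a uniform hypergraph. -/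
noncomputable def lagPolyU {n : ℕ} (E : Finset (Finset (Fin n))) (x : Fin n → ℝ) : ℝ :=
  ∑ e ∈ E, ∏ i ∈ e, x i

/-- A legal weighting: nonnegative entries summing to 1. -/
def isLegal {n : ℕ} (x : Fin n → ℝ) : Prop :=
  (∑ i, x i) = 1 ∧ ∀ i, 0 ≤ x i

/-- The Lagrangian λ(G): the maximum of λ(G,x) over legal weightings. -/
noncomputable def lagrangianU {n : ℕ} (E : Finset (Finset (Fin n))) : ℝ :=
  sSup {v : ℝ | ∃ x : Fin n → ℝ, isLegal x ∧ lagPolyU E x = v}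

/-- Edge set of the complete hypergraph on vertex set [t] with edge cardinalities in R. -/
def completeEdges (t : ℕ) (R : Finset ℕ) : Finset (Finset (Fin t)) :=
  Finset.univ.filter (fun e => e.card ∈ R)

/-- S induces a complete R-subgraph: every subset of S with cardinality in R is an edge. -/
def isCompleteSub {n : ℕ} (E : Finset (Finset (Fin n))) (R : Finset ℕ) (S : Finset (Fin n)) : Prop :=
  ∀ e ⊆ S, e.card ∈ R → e ∈ E

/-- The maximum complete R-subgraph (clique) has order t. -/
def maxCompleteOrder {n : ℕ} (E : Finset (Finset (Fin n))) (R : Finset ℕ) (t : ℕ) : Prop :=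
  (∃ S, S.card = t ∧ isCompleteSub E R S) ∧ ∀ S, isCompleteSub E R S → S.card ≤ t


lemma union_disj {ι : Type*} [DecidableEq ι] {a : ι} {S : Finset ι} (ha : a ∉ S) (n : ℕ) :
    Disjoint (S.powersetCard (n+1)) ((S.powersetCard n).image (insert a)) := by
  rw [Finset.disjoint_left]
  rintro e he hee
  rw [Finset.mem_image] at hee
  obtain ⟨p, _, rfl⟩ := hee
  rw [Finset.mem_powersetCard] at he
  exact ha (he.1 (Finset.mem_insert_self a p))

lemma insert_injOn {ι : Type*} [DecidableEq ι] {a : ι} {S : Finset ι} (ha : a ∉ S) (n : ℕ) :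
    ∀ p ∈ S.powersetCard n, ∀ q ∈ S.powersetCard n, insert a p = insert a q → p = q := by
  intro p hp q hq h
  rw [Finset.mem_powersetCard] at hp hq
  have hap : a ∉ p := fun h' => ha (hp.1 h')
  have haq : a ∉ q := fun h' => ha (hq.1 h')
  rw [← Finset.erase_insert hap, ← Finset.erase_insert haq, h]

lemma image_sum' {ι : Type*} [DecidableEq ι] {a : ι} {S : Finset ι} (ha : a ∉ S) (n : ℕ)
    (x : ι → ℝ) :
    ∑ e ∈ (S.powersetCard n).image (insert a), ∏ i ∈ e, x i
      = x a * ∑ e ∈ S.powersetCard n, ∏ i ∈ e, x i := by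
  rw [Finset.sum_image (insert_injOn ha n), Finset.mul_sum]
  refine Finset.sum_congr rfl fun p hp => ?_
  rw [Finset.mem_powersetCard] at hp
  rw [Finset.prod_insert fun h => ha (hp.1 h)]

lemma esymm1 {ι : Type*} [DecidableEq ι] (S : Finset ι) (x : ι → ℝ) :
    ∑ e ∈ S.powersetCard 1, ∏ i ∈ e, x i = ∑ i ∈ S, x i := by
  rw [Finset.powersetCard_one, Finset.sum_map]
  simp

lemma esymm2 {ι : Type*} [DecidableEq ι] (S : Finset ι) (x : ι → ℝ) :
    ∑ e ∈ S.powersetCard 2, ∏ i ∈ e, x i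
      = ((∑ i ∈ S, x i) ^ 2 - ∑ i ∈ S, x i ^ 2) / 2 := by
  induction S using Finset.induction with
  | empty => rw [Finset.powersetCard_eq_empty.2 (by simp)]; simp
  | insert a S ha ih =>
    rw [show (2:ℕ) = Nat.succ 1 from rfl, Finset.powersetCard_succ_insert ha,
      Finset.sum_union (union_disj ha 1), image_sum' ha 1, esymm1,
      Finset.sum_insert ha, Finset.sum_insert ha]
    rw [show Nat.succ 1 = 2 from rfl] at *
    rw [ih]; ring

lemma esymm3 {ι : Type*} [DecidableEq ι] (S : Finset ι) (x : ι → ℝ) :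
    ∑ e ∈ S.powersetCard 3, ∏ i ∈ e, x i
      = ((∑ i ∈ S, x i) ^ 3 - 3 * (∑ i ∈ S, x i) * (∑ i ∈ S, x i ^ 2)
          + 2 * ∑ i ∈ S, x i ^ 3) / 6 := by
  induction S using Finset.induction with
  | empty => rw [Finset.powersetCard_eq_empty.2 (by simp)]; simp
  | insert a S ha ih =>
    rw [show (3:ℕ) = Nat.succ 2 from rfl, Finset.powersetCard_succ_insert ha,
      Finset.sum_union (union_disj ha 2), image_sum' ha 2, esymm2,
      Finset.sum_insert ha, Finset.sum_insert ha, Finset.sum_insert ha]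
    rw [show Nat.succ 2 = 3 from rfl] at *
    rw [ih]; ring


-- pointwise tangent-line bound
lemma tangent (c u : ℝ) (hc : 3 ≤ c) (hu0 : 0 ≤ u) (hu1 : u ≤ 1) :
    u * (1 - u) ^ 2 ≤ 2 / c ^ 2 - 2 / c ^ 3 + (1 - 4 / c + 3 / c ^ 2) * u := by
  have hc0 : (0:ℝ) < c := by linarith
  have key : 2 / c ^ 2 - 2 / c ^ 3 + (1 - 4 / c + 3 / c ^ 2) * u - u * (1 - u) ^ 2
      = (u - 1 / c) ^ 2 * (2 - 2 / c - u) := by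
    field_simp
    ring
  nlinarith [sq_nonneg (u - 1 / c), mul_nonneg (sq_nonneg (u - 1/c)) (show (0:ℝ) ≤ 2 - 2/c - u by
    have : 2 / c ≤ 1 := by rw [div_le_one hc0]; linarith
    linarith)]

lemma complete3_bound (t : ℕ) (ht : 3 ≤ t) (x : Fin t → ℝ)
    (hs : ∑ i, x i = 1) (hnn : ∀ i, 0 ≤ x i) :
    ∑ e ∈ (univ : Finset (Fin t)).powersetCard 3, ∏ i ∈ e, x i
      ≤ ((t:ℝ) - 1) * ((t:ℝ) - 2) / (6 * (t:ℝ) ^ 2) := by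
  have hc : (3:ℝ) ≤ (t:ℝ) := by exact_mod_cast ht
  set c : ℝ := (t:ℝ) with hcdef
  have hc0 : (0:ℝ) < c := by linarith
  have hc1 : (0:ℝ) < c - 1 := by linarith
  set s2 : ℝ := ∑ i, x i ^ 2 with hs2
  set s3 : ℝ := ∑ i, x i ^ 3 with hs3
  rw [esymm3 univ x, hs, ← hs2, ← hs3]
  have hx1 : ∀ i, x i ≤ 1 := by
    intro i
    calc x i ≤ ∑ j, x j := Finset.single_le_sum (fun j _ => hnn j) (Finset.mem_univ i)
    _ = 1 := hs
  -- Cauchy–Schwarz step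
  have stepCS : ∀ i : Fin t, (1 - x i) ^ 2 ≤ (c - 1) * (s2 - x i ^ 2) := by
    intro i
    have h := sq_sum_le_card_mul_sum_sq (s := univ.erase i) (f := x)
    have e1 : ∑ j ∈ univ.erase i, x j = 1 - x i := by
      have := Finset.sum_erase_add univ x (Finset.mem_univ i)
      rw [hs] at this; linarith
    have e2 : ∑ j ∈ univ.erase i, x j ^ 2 = s2 - x i ^ 2 := by
      have h' : (∑ j ∈ univ.erase i, x j ^ 2) + x i ^ 2 = s2 := by
        exact Finset.sum_erase_add univ (fun j => x j ^ 2) (Finset.mem_univ i)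
      linarith
    have ecard : ((univ.erase i).card : ℝ) = c - 1 := by
      rw [Finset.card_erase_of_mem (Finset.mem_univ i)]
      simp only [Finset.card_univ, Fintype.card_fin]
      have : 1 ≤ t := by omega
      push_cast [Nat.cast_sub this]
      ring
    rw [e1, e2, ecard] at h
    exact h
  -- the main identity
  have hiden : ∑ i, x i * ((1 - x i) ^ 2 - (s2 - x i ^ 2)) = 1 - 3 * s2 + 2 * s3 := by
    have expand : ∀ i ∈ (univ : Finset (Fin t)),
        x i * ((1 - x i) ^ 2 - (s2 - x i ^ 2)) = (x i - 2 * x i ^ 2 + 2 * x i ^ 3) - s2 * x i := by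
      intro i _; ring
    rw [Finset.sum_congr rfl expand, Finset.sum_sub_distrib, ← Finset.mul_sum, hs]
    have : ∑ i, (x i - 2 * x i ^ 2 + 2 * x i ^ 3)
        = (∑ i, x i) - 2 * s2 + 2 * s3 := by
      simp [Finset.sum_add_distrib, Finset.sum_sub_distrib, ← Finset.mul_sum, hs2, hs3]
    rw [this, hs]; ring
  -- per-index bound and summation
  have hsum1 : 1 - 3 * s2 + 2 * s3 ≤ (c - 2) / (c - 1) * ∑ i, x i * (1 - x i) ^ 2 := by
    rw [← hiden, Finset.mul_sum]
    refine Finset.sum_le_sum fun i _ => ?_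
    have h1 : (1 - x i) ^ 2 - (s2 - x i ^ 2) ≤ (1 - x i) ^ 2 * ((c - 2) / (c - 1)) := by
      have h2 : (1 - x i) ^ 2 / (c - 1) ≤ s2 - x i ^ 2 := by
        rw [div_le_iff₀ hc1]; nlinarith [stepCS i]
      have h3 : (1 - x i) ^ 2 * ((c - 2) / (c - 1)) = (1 - x i) ^ 2 - (1 - x i) ^ 2 / (c - 1) := by
        field_simp; ring
      linarith
    calc x i * ((1 - x i) ^ 2 - (s2 - x i ^ 2))
        ≤ x i * ((1 - x i) ^ 2 * ((c - 2) / (c - 1))) :=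
          mul_le_mul_of_nonneg_left h1 (hnn i)
      _ = (c - 2) / (c - 1) * (x i * (1 - x i) ^ 2) := by ring
  have hsum2 : ∑ i, x i * (1 - x i) ^ 2 ≤ ((c - 1) / c) ^ 2 := by
    calc ∑ i, x i * (1 - x i) ^ 2
        ≤ ∑ i, (2 / c ^ 2 - 2 / c ^ 3 + (1 - 4 / c + 3 / c ^ 2) * x i) :=
          Finset.sum_le_sum fun i _ => tangent c (x i) hc (hnn i) (hx1 i)
      _ = c * (2 / c ^ 2 - 2 / c ^ 3) + (1 - 4 / c + 3 / c ^ 2) * 1 := by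
          rw [Finset.sum_add_distrib, Finset.sum_const, ← Finset.mul_sum, hs]
          simp [Finset.card_univ, nsmul_eq_mul]
          exact Or.inl rfl
      _ = ((c - 1) / c) ^ 2 := by field_simp; ring
  have hfrac : (0:ℝ) ≤ (c - 2) / (c - 1) := div_nonneg (by linarith) (by linarith)
  have : 1 - 3 * s2 + 2 * s3 ≤ (c - 2) / (c - 1) * ((c - 1) / c) ^ 2 := by
    calc 1 - 3 * s2 + 2 * s3 ≤ (c - 2) / (c - 1) * ∑ i, x i * (1 - x i) ^ 2 := hsum1
    _ ≤ (c - 2) / (c - 1) * ((c - 1) / c) ^ 2 := mul_le_mul_of_nonneg_left hsum2 hfrac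
  have heq : (c - 2) / (c - 1) * ((c - 1) / c) ^ 2 = (c - 1) * (c - 2) / c ^ 2 := by
    field_simp
  rw [heq] at this
  have h6 : (c - 1) * (c - 2) / (6 * c ^ 2) = ((c - 1) * (c - 2) / c ^ 2) / 6 := by
    rw [div_div]
    norm_num [mul_comm]
  linarith


lemma card_filter_lt (n m : ℕ) (h : m ≤ n) :
    ((univ : Finset (Fin n)).filter (fun v : Fin n => (v : ℕ) < m)).card = m := by
  have key : (univ : Finset (Fin n)).filter (fun v : Fin n => (v : ℕ) < m)
      = (Finset.range m).attachFin (fun i hi => lt_of_lt_of_le (Finset.mem_range.1 hi) h) := by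
    ext v
    simp [Finset.mem_attachFin, Finset.mem_range]
  rw [key, Finset.card_attachFin, Finset.card_range]

lemma lag_le_card {n : ℕ} (E : Finset (Finset (Fin n))) (x : Fin n → ℝ)
    (hs : ∑ i, x i = 1) (hnn : ∀ i, 0 ≤ x i) :
    (∑ e ∈ E, ∏ i ∈ e, x i) ≤ E.card := by
  have hx1 : ∀ i, x i ≤ 1 := fun i => by
    calc x i ≤ ∑ j, x j := Finset.single_le_sum (fun j _ => hnn j) (Finset.mem_univ i)
    _ = 1 := hs
  calc ∑ e ∈ E, ∏ i ∈ e, x i ≤ ∑ e ∈ E, (1:ℝ) :=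
        Finset.sum_le_sum fun e _ =>
          Finset.prod_le_one (fun i _ => hnn i) (fun i _ => hx1 i)
    _ = E.card := by simp

lemma bddAbove_lagSet {n : ℕ} (E : Finset (Finset (Fin n))) :
    BddAbove {v : ℝ | ∃ x : Fin n → ℝ, (( ∑ i, x i) = 1 ∧ ∀ i, 0 ≤ x i) ∧ (∑ e ∈ E, ∏ i ∈ e, x i) = v} := by
  refine ⟨E.card, ?_⟩
  rintro v ⟨x, ⟨hs, hnn⟩, rfl⟩
  exact lag_le_card E x hs hnn

lemma completeEdges_eq (t : ℕ) :
    completeEdges t ({3} : Finset ℕ) = (univ : Finset (Fin t)).powersetCard 3 := by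
  ext e
  simp [completeEdges, Finset.mem_powersetCard, Finset.subset_univ]


lemma lagrangian_complete3 (t : ℕ) (ht : 3 ≤ t) :
    lagrangianU (completeEdges t ({3} : Finset ℕ))
      = ((t:ℝ) - 1) * ((t:ℝ) - 2) / (6 * (t:ℝ) ^ 2) := by
  have ht0 : (0:ℝ) < (t:ℝ) := by
    have : 0 < t := by omega
    exact_mod_cast this
  have hleg : isLegal (fun _ : Fin t => 1 / (t:ℝ)) := by
    constructor
    · simp [Finset.sum_const, Finset.card_univ]
      field_simp
    · intro i; positivity
  have hval : lagPolyU (completeEdges t ({3} : Finset ℕ)) (fun _ : Fin t => 1 / (t:ℝ))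
      = ((t:ℝ) - 1) * ((t:ℝ) - 2) / (6 * (t:ℝ) ^ 2) := by
    rw [lagPolyU, completeEdges_eq, esymm3]
    simp only [Finset.sum_const, Finset.card_univ, Fintype.card_fin, nsmul_eq_mul]
    have h3 : ((t:ℝ)) ≠ 0 := ne_of_gt ht0
    field_simp
    ring
  apply le_antisymm
  · apply csSup_le
    · exact ⟨_, _, hleg, rfl⟩
    · rintro v ⟨x, ⟨hs, hnn⟩, rfl⟩
      rw [lagPolyU, completeEdges_eq]
      exact complete3_bound t ht x hs hnn
  · exact le_csSup (bddAbove_lagSet _) ⟨_, hleg, hval⟩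

/-- The example after Theorem 4: the 3-graph on [t+1] with edges [t]^(3), all {i₁,i₂,t+1} with
{i₁,i₂} ⊆ [t-1], and {1,t,t+1}, has Lagrangian strictly larger than λ([t]^(3)). -/
theorem clique_plus_edges_exceeds (t : ℕ) (ht : 3 ≤ t)
    (E : Finset (Finset (Fin (t + 1))))
    (hE : E =
      (Finset.univ.filter (fun e : Finset (Fin (t + 1)) =>
        e.card = 3 ∧ ∀ v ∈ e, (v : ℕ) < t)) ∪
      (Finset.univ.filter (fun e : Finset (Fin (t + 1)) =>
        e.card = 3 ∧ Fin.last t ∈ e ∧ ∀ v ∈ e.erase (Fin.last t), (v : ℕ) < t - 1)) ∪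
      {({⟨0, by omega⟩, ⟨t - 1, by omega⟩, Fin.last t} : Finset (Fin (t + 1)))}) :
    lagrangianU E > lagrangianU (completeEdges t ({3} : Finset ℕ)) ∧
    lagrangianU (completeEdges t ({3} : Finset ℕ)) =
      ((t : ℝ) - 1) * ((t : ℝ) - 2) / (6 * (t : ℝ) ^ 2) ∧
    isLegal (fun v : Fin (t + 1) =>
      if (v : ℕ) < t - 1 then 1 / (t : ℝ) else 1 / (2 * (t : ℝ))) ∧
    lagPolyU E (fun v : Fin (t + 1) =>
        if (v : ℕ) < t - 1 then 1 / (t : ℝ) else 1 / (2 * (t : ℝ))) >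
      lagrangianU (completeEdges t ({3} : Finset ℕ)) := by
  have hc3 : (3:ℝ) ≤ (t:ℝ) := by exact_mod_cast ht
  have hc0 : (0:ℝ) < (t:ℝ) := by linarith
  have hcne : ((t:ℝ)) ≠ 0 := ne_of_gt hc0
  set c : ℝ := (t:ℝ) with hcdef
  set x : Fin (t+1) → ℝ := fun v : Fin (t + 1) =>
      if (v : ℕ) < t - 1 then 1 / (t : ℝ) else 1 / (2 * (t : ℝ)) with hxdef
  have hcastm1 : ((t - 1 : ℕ) : ℝ) = c - 1 := by
    have h1 : 1 ≤ t := by omega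
    push_cast [Nat.cast_sub h1]
    ring
  -- the distinguished vertices
  set v0 : Fin (t+1) := ⟨0, by omega⟩ with hv0
  set vt : Fin (t+1) := ⟨t - 1, by omega⟩ with hvt
  have hxv0 : x v0 = 1 / c := by
    rw [hxdef]; simp only [hv0]
    rw [if_pos]; show (0:ℕ) < t - 1; omega
  have hxvt : x vt = 1 / (2 * c) := by
    rw [hxdef]; simp only [hvt]
    rw [if_neg]; show ¬ (t - 1 < t - 1); omega
  have hxlast : x (Fin.last t) = 1 / (2 * c) := by
    rw [hxdef]; simp only [Fin.val_last]
    rw [if_neg]; omega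
  have hne0t : v0 ≠ vt := by
    simp only [Fin.ne_iff_vne, hv0, hvt]; omega
  have hne0l : v0 ≠ Fin.last t := by
    simp only [Fin.ne_iff_vne, hv0, Fin.val_last]; omega
  have hnetl : vt ≠ Fin.last t := by
    simp only [Fin.ne_iff_vne, hvt, Fin.val_last]; omega
  -- the vertex sets
  set S' : Finset (Fin (t+1)) := univ.filter (fun v : Fin (t+1) => (v : ℕ) < t - 1) with hS'
  set S : Finset (Fin (t+1)) := univ.filter (fun v : Fin (t+1) => (v : ℕ) < t) with hSdef
  have hcardS' : S'.card = t - 1 := card_filter_lt (t+1) (t-1) (by omega)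
  have hvtS' : vt ∉ S' := by simp [hS', hvt]
  have hlastS' : Fin.last t ∉ S' := by
    simp only [hS', Finset.mem_filter, Finset.mem_univ, true_and, Fin.val_last]
    omega
  have hS : S = insert vt S' := by
    ext v
    simp only [hSdef, hS', Finset.mem_insert, Finset.mem_filter, Finset.mem_univ, true_and,
      Fin.ext_iff, hvt]
    omega
  -- power sums over S'
  have hconst : ∀ k : ℕ, ∑ v ∈ S', x v ^ k = (c - 1) * (1 / c) ^ k := by
    intro k
    have : ∀ v ∈ S', x v ^ k = (1 / c) ^ k := by
      intro v hv
      rw [hS', Finset.mem_filter] at hv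
      rw [hxdef]; simp only [if_pos hv.2]; rfl
    rw [Finset.sum_congr rfl this, Finset.sum_const, hcardS', nsmul_eq_mul, hcastm1]
  have hS'1 : ∑ v ∈ S', x v = (c - 1) / c := by
    have := hconst 1; simpa [div_eq_mul_inv] using this
  have hS'2 : ∑ v ∈ S', x v ^ 2 = (c - 1) / c ^ 2 := by
    rw [hconst 2]; field_simp
  have hS'3 : ∑ v ∈ S', x v ^ 3 = (c - 1) / c ^ 3 := by
    rw [hconst 3]; field_simp
  -- power sums over S
  have hSsum1 : ∑ v ∈ S, x v = (c - 1) / c + 1 / (2 * c) := by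
    rw [hS, Finset.sum_insert hvtS', hS'1, hxvt]; ring
  have hSsum2 : ∑ v ∈ S, x v ^ 2 = (c - 1) / c ^ 2 + 1 / (4 * c ^ 2) := by
    rw [hS, Finset.sum_insert hvtS', hS'2, hxvt]; field_simp; ring
  have hSsum3 : ∑ v ∈ S, x v ^ 3 = (c - 1) / c ^ 3 + 1 / (8 * c ^ 3) := by
    rw [hS, Finset.sum_insert hvtS', hS'3, hxvt]; field_simp; ring
  -- legality
  have hlegal : isLegal x := by
    constructor
    · have hcardnot :
          (univ.filter (fun v : Fin (t+1) => ¬ (v : ℕ) < t - 1)).card = 2 := by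
        have := Finset.card_filter_add_card_filter_not
          (s := (univ : Finset (Fin (t+1)))) (p := fun v : Fin (t+1) => (v : ℕ) < t - 1)
        rw [hS'] at hcardS'
        simp only [Finset.card_univ, Fintype.card_fin] at this
        omega
      have hsum_not :
          ∑ v ∈ univ.filter (fun v : Fin (t+1) => ¬ (v : ℕ) < t - 1), x v
            = 2 * (1 / (2 * c)) := by
        have hval : ∀ v ∈ univ.filter (fun v : Fin (t+1) => ¬ (v : ℕ) < t - 1),
            x v = 1 / (2 * c) := by
          intro v hv
          rw [Finset.mem_filter] at hv
          rw [hxdef]; simp only [if_neg hv.2]; rfl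
        rw [Finset.sum_congr rfl hval, Finset.sum_const, hcardnot, nsmul_eq_mul]
        norm_num
      have hsplit := Finset.sum_filter_add_sum_filter_not univ
        (fun v : Fin (t+1) => (v : ℕ) < t - 1) x
      rw [← hsplit, ← hS', hS'1, hsum_not]
      field_simp
      ring
    · intro v
      rw [hxdef]
      dsimp only
      split <;> positivity
  -- edge families
  set F1 : Finset (Finset (Fin (t+1))) := univ.filter
    (fun e : Finset (Fin (t+1)) => e.card = 3 ∧ ∀ v ∈ e, (v : ℕ) < t) with hF1def
  set F2 : Finset (Finset (Fin (t+1))) := univ.filter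
    (fun e : Finset (Fin (t+1)) => e.card = 3 ∧ Fin.last t ∈ e ∧
      ∀ v ∈ e.erase (Fin.last t), (v : ℕ) < t - 1) with hF2def
  have hF1 : F1 = S.powersetCard 3 := by
    ext e
    simp only [hF1def, Finset.mem_filter, Finset.mem_univ, true_and,
      Finset.mem_powersetCard, hSdef]
    constructor
    · rintro ⟨h1, h2⟩
      exact ⟨fun v hv => Finset.mem_filter.2 ⟨Finset.mem_univ v, h2 v hv⟩, h1⟩
    · rintro ⟨h1, h2⟩
      exact ⟨h2, fun v hv => (Finset.mem_filter.1 (h1 hv)).2⟩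
  have hF2 : F2 = (S'.powersetCard 2).image (insert (Fin.last t)) := by
    ext e
    simp only [hF2def, Finset.mem_filter, Finset.mem_univ, true_and, Finset.mem_image,
      Finset.mem_powersetCard]
    constructor
    · rintro ⟨h1, h2, h3⟩
      refine ⟨e.erase (Fin.last t), ⟨?_, ?_⟩, Finset.insert_erase h2⟩
      · intro v hv
        rw [hS', Finset.mem_filter]
        exact ⟨Finset.mem_univ v, h3 v hv⟩
      · rw [Finset.card_erase_of_mem h2, h1]
    · rintro ⟨p, ⟨hsub, hcard⟩, rfl⟩
      have hlastp : Fin.last t ∉ p := fun h => hlastS' (hsub h)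
      refine ⟨?_, Finset.mem_insert_self _ _, ?_⟩
      · rw [Finset.card_insert_of_notMem hlastp, hcard]
      · intro v hv
        rw [Finset.erase_insert hlastp] at hv
        have := hsub hv
        rw [hS', Finset.mem_filter] at this
        exact this.2
  -- disjointness
  have hd12 : Disjoint F1 F2 := by
    rw [Finset.disjoint_left]
    rintro e he1 he2
    rw [hF1def, Finset.mem_filter] at he1
    rw [hF2def, Finset.mem_filter] at he2
    have := he1.2.2 (Fin.last t) he2.2.2.1
    simp only [Fin.val_last] at this
    omega
  have he3F1 : ({v0, vt, Fin.last t} : Finset (Fin (t+1))) ∉ F1 := by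
    rw [hF1def, Finset.mem_filter]
    rintro ⟨-, -, h⟩
    have := h (Fin.last t) (by simp)
    simp only [Fin.val_last] at this
    omega
  have he3F2 : ({v0, vt, Fin.last t} : Finset (Fin (t+1))) ∉ F2 := by
    rw [hF2def, Finset.mem_filter]
    rintro ⟨-, -, -, h⟩
    have hvtm : vt ∈ ({v0, vt, Fin.last t} : Finset (Fin (t+1))).erase (Fin.last t) :=
      Finset.mem_erase.2 ⟨hnetl, by simp⟩
    have h2 : (t - 1 : ℕ) < t - 1 := by simpa [hvt] using h vt hvtm
    omega
  have hd3 : Disjoint (F1 ∪ F2)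
      ({({v0, vt, Fin.last t} : Finset (Fin (t+1)))} : Finset (Finset (Fin (t+1)))) := by
    rw [Finset.disjoint_right]
    intro e he
    rw [Finset.mem_singleton] at he
    subst he
    rw [Finset.mem_union]
    rintro (h | h)
    · exact he3F1 h
    · exact he3F2 h
  -- the product over the extra edge
  have hprod3 : ∏ i ∈ ({v0, vt, Fin.last t} : Finset (Fin (t+1))), x i
      = 1 / c * (1 / (2 * c) * (1 / (2 * c))) := by
    rw [Finset.prod_insert (by simp [hne0t, hne0l]),
      Finset.prod_insert (by simp [hnetl]), Finset.prod_singleton, hxv0, hxvt, hxlast]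
  -- the value of the Lagrange polynomial
  have hval : lagPolyU E x = ((c - 1) / c + 1 / (2 * c)) ^ 3 / 6
      - 3 * ((c - 1) / c + 1 / (2 * c)) * ((c - 1) / c ^ 2 + 1 / (4 * c ^ 2)) / 6
      + 2 * ((c - 1) / c ^ 3 + 1 / (8 * c ^ 3)) / 6
      + 1 / (2 * c) * ((((c - 1) / c) ^ 2 - (c - 1) / c ^ 2) / 2)
      + 1 / c * (1 / (2 * c) * (1 / (2 * c))) := by
    rw [lagPolyU, hE, Finset.sum_union hd3, Finset.sum_union hd12, Finset.sum_singleton,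
      hprod3, hF1, hF2, esymm3, image_sum' hlastS' 2 x, esymm2,
      hSsum1, hSsum2, hSsum3, hS'1, hS'2, hxlast]
    ring
  have hgt : lagPolyU E x > (c - 1) * (c - 2) / (6 * c ^ 2) := by
    rw [hval]
    have hkey : (((c - 1) / c + 1 / (2 * c)) ^ 3 / 6
        - 3 * ((c - 1) / c + 1 / (2 * c)) * ((c - 1) / c ^ 2 + 1 / (4 * c ^ 2)) / 6
        + 2 * ((c - 1) / c ^ 3 + 1 / (8 * c ^ 3)) / 6
        + 1 / (2 * c) * ((((c - 1) / c) ^ 2 - (c - 1) / c ^ 2) / 2)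
        + 1 / c * (1 / (2 * c) * (1 / (2 * c))))
        - (c - 1) * (c - 2) / (6 * c ^ 2) = 1 / (4 * c ^ 3) := by
      field_simp
      ring
    have hpos : (0:ℝ) < 1 / (4 * c ^ 3) := by positivity
    linarith
  have hle : lagPolyU E x ≤ lagrangianU E :=
    le_csSup (bddAbove_lagSet E) ⟨x, hlegal, rfl⟩
  refine ⟨?_, lagrangian_complete3 t ht, hlegal, ?_⟩
  · rw [lagrangian_complete3 t ht]
    calc ((t:ℝ) - 1) * ((t:ℝ) - 2) / (6 * (t:ℝ) ^ 2) < lagPolyU E x := hgt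
    _ ≤ lagrangianU E := hle
  · rw [lagrangian_complete3 t ht]
    exact hgt
end

section
/- Let s ≥ 4 and n ≥ s be integers, and let G be a {1,3}-graph on vertex set [n] whose singleton edges are exactly {1}, {2}, {3} and whose 3-uniform edge set E³ contains all 3-element subsets of [s]. Then λ'(G) > 1 + 2/9 = λ'(K_3^{{1,3}}). In particular, the legal weighting with x_1 = x_2 = x_3 = 0.333, x_4 = … = x_s = 0.001/(s-3), and x_{s+1} = … = x_n = 0 witnesses this strict inequality. -/
open Finset

/-- λ'(H,x) = Σ_{e∈E} |e|! · ∏_{i∈e} x_i  (equals Σ_{j∈R(H)} j!·Σ_{|e|=j} ∏ x_i). -/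
noncomputable def lagPoly {n : ℕ} (E : Finset (Finset (Fin n))) (x : Fin n → ℝ) : ℝ :=
  ∑ e ∈ E, (Nat.factorial e.card : ℝ) * ∏ i ∈ e, x i

/-- The Lagrangian λ'(H): the maximum of λ'(H,x) over legal weightings. -/
noncomputable def lagrangian {n : ℕ} (E : Finset (Finset (Fin n))) : ℝ :=
  sSup {v : ℝ | ∃ x : Fin n → ℝ, isLegal x ∧ lagPoly E x = v}

lemma lag_bdd {n : ℕ} (E : Finset (Finset (Fin n))) :
    BddAbove {v : ℝ | ∃ x : Fin n → ℝ, isLegal x ∧ lagPoly E x = v} := by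
  refine ⟨∑ e ∈ E, (Nat.factorial e.card : ℝ), ?_⟩
  rintro v ⟨x, ⟨hsum, hnn⟩, rfl⟩
  refine Finset.sum_le_sum fun e _ => ?_
  have hx1 : ∀ i, x i ≤ 1 := fun i =>
    hsum ▸ Finset.single_le_sum (fun j _ => hnn j) (Finset.mem_univ i)
  calc (Nat.factorial e.card : ℝ) * ∏ i ∈ e, x i
      ≤ (Nat.factorial e.card : ℝ) * 1 := by
        apply mul_le_mul_of_nonneg_left
          (Finset.prod_le_one (fun i _ => hnn i) (fun i _ => hx1 i)) (by positivity)
    _ = (Nat.factorial e.card : ℝ) := mul_one _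

lemma lag_le {n : ℕ} (E : Finset (Finset (Fin n))) (x : Fin n → ℝ) (hx : isLegal x) :
    lagPoly E x ≤ lagrangian E :=
  le_csSup (lag_bdd E) ⟨x, hx, rfl⟩

lemma K3val (x : Fin 3 → ℝ) : lagPoly (completeEdges 3 ({1,3} : Finset ℕ)) x
    = x 0 + x 1 + x 2 + 6 * (x 0 * (x 1 * x 2)) := by
  rw [show completeEdges 3 ({1,3} : Finset ℕ) =
    ({{0},{1},{2},{0,1,2}} : Finset (Finset (Fin 3))) from by decide]
  rw [lagPoly]
  rw [show ({{0},{1},{2},{0,1,2}} : Finset (Finset (Fin 3))) =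
    insert {0} (insert {1} (insert {2} ({{0,1,2}} : Finset (Finset (Fin 3))))) from rfl]
  rw [Finset.sum_insert (by decide), Finset.sum_insert (by decide),
    Finset.sum_insert (by decide), Finset.sum_singleton]
  norm_num [show (#({0} : Finset (Fin 3))) = 1 by decide, show (#({1} : Finset (Fin 3))) = 1 by decide,
    show (#({2} : Finset (Fin 3))) = 1 by decide,
    show (#({0,1,2} : Finset (Fin 3))) = 3 by decide,
    show ({0,1,2} : Finset (Fin 3)) = Finset.univ by decide, Fin.prod_univ_three, Nat.factorial]
  ring

lemma K3lag : lagrangian (completeEdges 3 ({1,3} : Finset ℕ)) = 1 + 2 / 9 := by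
  have hwit : isLegal (fun _ : Fin 3 => (1/3 : ℝ)) := by
    constructor
    · rw [Fin.sum_univ_three]; norm_num
    · intro i; norm_num
  apply le_antisymm
  · have hne : (lagPoly (completeEdges 3 ({1,3} : Finset ℕ)) (fun _ : Fin 3 => (1/3 : ℝ))) ∈
        {v : ℝ | ∃ x : Fin 3 → ℝ, isLegal x ∧ lagPoly (completeEdges 3 ({1,3} : Finset ℕ)) x = v} :=
      ⟨_, hwit, rfl⟩
    apply csSup_le ⟨_, hne⟩
    rintro v ⟨x, ⟨hsum, hnn⟩, rfl⟩
    rw [K3val]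
    rw [Fin.sum_univ_three] at hsum
    have h0 := hnn 0; have h1 := hnn 1; have h2 := hnn 2
    nlinarith [sq_nonneg (x 0 - x 1), sq_nonneg (x 1 - x 2), sq_nonneg (x 0 - x 2),
      mul_nonneg h0 h1, mul_nonneg h1 h2, mul_nonneg h0 h2,
      mul_nonneg (mul_nonneg h0 h1) h2]
  · refine le_csSup (lag_bdd _) ⟨fun _ => (1/3 : ℝ), hwit, ?_⟩
    rw [K3val]; norm_num

lemma legal_sum (s n : ℕ) (hs : 4 ≤ s) (hn : s ≤ n) :
    (∑ i : Fin n, (fun v : Fin n => if (v : ℕ) < 3 then (0.333 : ℝ)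
      else if (v : ℕ) < s then (0.001 : ℝ) / ((s : ℝ) - 3) else 0) i) = 1 := by
  have hs3 : (0:ℝ) < (s:ℝ) - 3 := by
    have : (4:ℝ) ≤ (s:ℝ) := by exact_mod_cast hs
    linarith
  rw [Fin.sum_univ_eq_sum_range (fun i : ℕ => if i < 3 then (0.333 : ℝ)
      else if i < s then (0.001 : ℝ) / ((s : ℝ) - 3) else 0)]
  rw [← Finset.sum_range_add_sum_Ico _ hn, ← Finset.sum_range_add_sum_Ico _ (show 3 ≤ s by omega)]
  have e1 : ∑ i ∈ Finset.range 3, (if i < 3 then (0.333 : ℝ)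
      else if i < s then (0.001 : ℝ) / ((s : ℝ) - 3) else 0) = 0.999 := by
    rw [Finset.sum_range_succ, Finset.sum_range_succ, Finset.sum_range_one]
    norm_num
  have e2 : ∑ i ∈ Finset.Ico 3 s, (if i < 3 then (0.333 : ℝ)
      else if i < s then (0.001 : ℝ) / ((s : ℝ) - 3) else 0) = 0.001 := by
    rw [Finset.sum_congr rfl (fun i hi => ?_), Finset.sum_const, Nat.card_Ico,
      nsmul_eq_mul, Nat.cast_sub (by omega)]
    · push_cast
      rw [mul_div_cancel₀ _ hs3.ne']
    · obtain ⟨h3i, his⟩ := Finset.mem_Ico.1 hi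
      rw [if_neg (by omega), if_pos his]
  have e3 : ∑ i ∈ Finset.Ico s n, (if i < 3 then (0.333 : ℝ)
      else if i < s then (0.001 : ℝ) / ((s : ℝ) - 3) else 0) = 0 := by
    apply Finset.sum_eq_zero
    intro i hi
    obtain ⟨hsi, _⟩ := Finset.mem_Ico.1 hi
    rw [if_neg (by omega), if_neg (by omega)]
  rw [e1, e2, e3]; norm_num

lemma key_bound (s n : ℕ) (hs : 4 ≤ s) (hn : s ≤ n)
    (E : Finset (Finset (Fin n)))
    (h1 : E.filter (fun e => e.card = 1) =
      ({{⟨0, Nat.lt_of_lt_of_le (Nat.lt_of_lt_of_le (Nat.lt_of_sub_eq_succ (l := 3) rfl) hs) hn⟩}, {⟨1, Nat.lt_of_lt_of_le (Nat.lt_of_lt_of_le (Nat.lt_of_sub_eq_succ (l := 2) rfl) hs) hn⟩}, {⟨2, Nat.lt_of_lt_of_le (Nat.lt_of_lt_of_le (Nat.lt_of_sub_eq_succ (l := 1) rfl) hs) hn⟩}} : Finset (Finset (Fin n))))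
    (h3 : ∀ e : Finset (Fin n), e.card = 3 → (∀ v ∈ e, (v : ℕ) < s) → e ∈ E) :
    lagPoly E (fun v : Fin n => if (v : ℕ) < 3 then (0.333 : ℝ)
        else if (v : ℕ) < s then (0.001 : ℝ) / ((s : ℝ) - 3) else 0) > 1 + 2 / 9 := by
  have hs3 : (0:ℝ) < (s:ℝ) - 3 := by
    have : (4:ℝ) ≤ (s:ℝ) := by exact_mod_cast hs
    linarith
  set x : Fin n → ℝ := fun v : Fin n => if (v : ℕ) < 3 then (0.333 : ℝ)
      else if (v : ℕ) < s then (0.001 : ℝ) / ((s : ℝ) - 3) else 0 with hxdef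
  have hx_nn : ∀ v, 0 ≤ x v := by
    intro v; rw [hxdef]; dsimp only
    split_ifs
    · norm_num
    · positivity
    · norm_num
  set a0 : Fin n := ⟨0, by omega⟩ with ha0
  set a1 : Fin n := ⟨1, by omega⟩ with ha1
  set a2 : Fin n := ⟨2, by omega⟩ with ha2
  have hv0 : (a0 : ℕ) = 0 := rfl
  have hv1 : (a1 : ℕ) = 1 := rfl
  have hv2 : (a2 : ℕ) = 2 := rfl
  have h01 : a0 ≠ a1 := by rw [Fin.ne_iff_vne, hv0, hv1]; omega
  have h02 : a0 ≠ a2 := by rw [Fin.ne_iff_vne, hv0, hv2]; omega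
  have h12 : a1 ≠ a2 := by rw [Fin.ne_iff_vne, hv1, hv2]; omega
  have hx0 : x a0 = 0.333 := by rw [hxdef]; simp [hv0]
  have hx1 : x a1 = 0.333 := by rw [hxdef]; simp [hv1]
  have hx2 : x a2 = 0.333 := by rw [hxdef]; simp [hv2]
  set A : Finset (Fin n) := (Finset.Ico 3 s).attachFin
    (fun m hm => by have := (Finset.mem_Ico.1 hm).2; omega) with hAdef
  have hA : ∀ v : Fin n, v ∈ A ↔ 3 ≤ (v:ℕ) ∧ (v:ℕ) < s := by
    intro v; rw [hAdef, Finset.mem_attachFin, Finset.mem_Ico]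
  have hAcard : A.card = s - 3 := by rw [hAdef, Finset.card_attachFin, Nat.card_Ico]
  have hxA : ∀ v ∈ A, x v = (0.001 : ℝ) / ((s : ℝ) - 3) := by
    intro v hv
    obtain ⟨h3v, hvs⟩ := (hA v).1 hv
    rw [hxdef]; dsimp only
    rw [if_neg (by omega), if_pos hvs]
  -- distinctness of A-members from a0,a1,a2
  have hvA : ∀ v ∈ A, v ≠ a0 ∧ v ≠ a1 ∧ v ≠ a2 := by
    intro v hv
    obtain ⟨h3v, _⟩ := (hA v).1 hv
    refine ⟨?_, ?_, ?_⟩ <;> (rw [Fin.ne_iff_vne]) <;> omega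
  have hc012 : ({a0,a1,a2} : Finset (Fin n)).card = 3 := by
    rw [Finset.card_insert_of_notMem (by simp [h01, h02]),
      Finset.card_insert_of_notMem (by simp [h12]), Finset.card_singleton]
  have hctrip : ∀ (a b : Fin n), a ≠ b → ∀ v ∈ A, v ≠ a → v ≠ b →
      ({a, b, v} : Finset (Fin n)).card = 3 := by
    intro a b hab v hv hva hvb
    rw [Finset.card_insert_of_notMem (by simp [hab, Ne.symm hva]),
      Finset.card_insert_of_notMem (by simp [Ne.symm hvb]), Finset.card_singleton]
  -- subset of E
  have hsub : ({{a0},{a1},{a2},{a0,a1,a2}} : Finset (Finset (Fin n)))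
      ∪ A.image (fun v => {a0,a1,v}) ∪ A.image (fun v => {a0,a2,v})
      ∪ A.image (fun v => {a1,a2,v}) ⊆ E := by
    have himg : ∀ (a b : Fin n), a ≠ b → a ∈ ({a0,a1,a2} : Finset (Fin n)) →
        b ∈ ({a0,a1,a2} : Finset (Fin n)) →
        ∀ e ∈ A.image (fun v => ({a, b, v} : Finset (Fin n))), e ∈ E := by
      intro a b hab hamem hbmem e he
      obtain ⟨v, hv, rfl⟩ := Finset.mem_image.1 he
      obtain ⟨hva, hvb, hvc⟩ := hvA v hv
      obtain ⟨h3v, hvs⟩ := (hA v).1 hv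
      have hlt : ∀ w : Fin n, w ∈ ({a0,a1,a2} : Finset (Fin n)) → (w : ℕ) < s := by
        intro w hw
        simp only [Finset.mem_insert, Finset.mem_singleton] at hw
        rcases hw with h | h | h <;> subst h <;> omega
      have hva' : v ≠ a := by
        simp only [Finset.mem_insert, Finset.mem_singleton] at hamem
        rcases hamem with h | h | h <;> subst h <;> assumption
      have hvb' : v ≠ b := by
        simp only [Finset.mem_insert, Finset.mem_singleton] at hbmem
        rcases hbmem with h | h | h <;> subst h <;> assumption
      refine h3 _ (hctrip a b hab v hv hva' hvb') ?_
      intro u hu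
      simp only [Finset.mem_insert, Finset.mem_singleton] at hu
      rcases hu with h | h | h
      · exact h ▸ hlt a hamem
      · exact h ▸ hlt b hbmem
      · exact h ▸ hvs
    intro e he
    simp only [Finset.mem_union] at he
    have hsing : ∀ a : Fin n, a ∈ ({a0, a1, a2} : Finset (Fin n)) → ({a} : Finset (Fin n)) ∈ E := by
      intro a ha
      have : ({a} : Finset (Fin n)) ∈ E.filter (fun e => e.card = 1) := by
        rw [h1]
        simp only [Finset.mem_insert, Finset.mem_singleton] at ha ⊢
        rcases ha with h | h | h <;> simp [h, ha0, ha1, ha2]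
      exact (Finset.mem_filter.1 this).1
    rcases he with ((hB | hI) | hI) | hI
    · simp only [Finset.mem_insert, Finset.mem_singleton] at hB
      rcases hB with h | h | h | h
      · exact h ▸ hsing a0 (by simp)
      · exact h ▸ hsing a1 (by simp)
      · exact h ▸ hsing a2 (by simp)
      · subst h
        refine h3 _ hc012 ?_
        intro v hv
        simp only [Finset.mem_insert, Finset.mem_singleton] at hv
        rcases hv with h | h | h <;> subst h <;> omega
    · exact himg a0 a1 h01 (by simp) (by simp) e hI
    · exact himg a0 a2 h02 (by simp) (by simp) e hI
    · exact himg a1 a2 h12 (by simp) (by simp) e hI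
  -- disjointness
  have hdBimg : ∀ (a b : Fin n), Disjoint ({{a0},{a1},{a2},{a0,a1,a2}} : Finset (Finset (Fin n)))
      (A.image (fun v => ({a, b, v} : Finset (Fin n)))) := by
    intro a b
    rw [Finset.disjoint_left]
    intro e heB heI
    obtain ⟨v, hv, rfl⟩ := Finset.mem_image.1 heI
    obtain ⟨h3v, _⟩ := (hA v).1 hv
    have hvmem : v ∈ ({a, b, v} : Finset (Fin n)) := by simp
    simp only [Finset.mem_insert, Finset.mem_singleton] at heB
    rcases heB with h | h | h | h <;> rw [h] at hvmem <;>
      simp only [Finset.mem_insert, Finset.mem_singleton] at hvmem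
    · rw [hvmem] at h3v; omega
    · rw [hvmem] at h3v; omega
    · rw [hvmem] at h3v; omega
    · rcases hvmem with h' | h' | h' <;> rw [h'] at h3v <;> omega
  have hdimg : ∀ (a b c d w : Fin n), (w : ℕ) < 3 → w ≠ c → w ≠ d →
      (∀ v ∈ A, w ∈ ({a, b, v} : Finset (Fin n))) →
      Disjoint (A.image (fun v => ({a, b, v} : Finset (Fin n))))
        (A.image (fun v => ({c, d, v} : Finset (Fin n)))) := by
    intro a b c d w hw3 hwc hwd hwmem
    rw [Finset.disjoint_left]
    rintro e he1 he2
    obtain ⟨v, hv, rfl⟩ := Finset.mem_image.1 he1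
    obtain ⟨u, hu, he⟩ := Finset.mem_image.1 he2
    have hm : w ∈ ({a, b, v} : Finset (Fin n)) := hwmem v hv
    rw [← he] at hm
    simp only [Finset.mem_insert, Finset.mem_singleton] at hm
    obtain ⟨h3u, _⟩ := (hA u).1 hu
    rcases hm with h | h | h
    · exact hwc h
    · exact hwd h
    · rw [h] at hw3; omega
  -- per-pair sums
  have htripsum : ∀ (a b : Fin n), a ≠ b → (∀ v ∈ A, v ≠ a ∧ v ≠ b) →
      x a = 0.333 → x b = 0.333 →
      ∑ e ∈ A.image (fun v => ({a, b, v} : Finset (Fin n))),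
        ((Nat.factorial e.card : ℝ) * ∏ i ∈ e, x i)
      = ((s - 3 : ℕ) : ℝ) * (6 * (0.333 * (0.333 * ((0.001 : ℝ) / ((s : ℝ) - 3))))) := by
    intro a b hab hvab hxa hxb
    have hinj : ∀ v ∈ A, ∀ u ∈ A, ({a, b, v} : Finset (Fin n)) = ({a, b, u} : Finset (Fin n)) → v = u := by
      intro v hv u hu h
      have : v ∈ ({a, b, u} : Finset (Fin n)) := h ▸ (by simp)
      simp only [Finset.mem_insert, Finset.mem_singleton] at this
      rcases this with h' | h' | h'
      · exact absurd h' (hvab v hv).1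
      · exact absurd h' (hvab v hv).2
      · exact h'
    rw [Finset.sum_image hinj]
    have hterm : ∀ v ∈ A, ((Nat.factorial (({a, b, v} : Finset (Fin n)).card) : ℝ)
        * ∏ i ∈ ({a, b, v} : Finset (Fin n)), x i)
        = 6 * (0.333 * (0.333 * ((0.001 : ℝ) / ((s : ℝ) - 3)))) := by
      intro v hv
      obtain ⟨hva, hvb⟩ := hvab v hv
      rw [hctrip a b hab v hv hva hvb,
        Finset.prod_insert (by simp [hab, Ne.symm hva]),
        Finset.prod_insert (by simp [Ne.symm hvb]), Finset.prod_singleton,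
        hxa, hxb, hxA v hv]
      norm_num [Nat.factorial]
    rw [Finset.sum_congr rfl hterm, Finset.sum_const, hAcard, nsmul_eq_mul]
  -- sum over base part
  have hne_sing_trip : ∀ c : Fin n, ({c} : Finset (Fin n)) ≠ ({a0,a1,a2} : Finset (Fin n)) := by
    intro c h
    have := hc012
    rw [← h, Finset.card_singleton] at this
    omega
  have hBsum : ∑ e ∈ ({{a0},{a1},{a2},{a0,a1,a2}} : Finset (Finset (Fin n))),
      ((Nat.factorial e.card : ℝ) * ∏ i ∈ e, x i) = 0.999 + 6 * 0.333 ^ 3 := by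
    rw [show ({{a0},{a1},{a2},{a0,a1,a2}} : Finset (Finset (Fin n))) =
      insert {a0} (insert {a1} (insert {a2} ({{a0,a1,a2}} : Finset (Finset (Fin n))))) from rfl]
    rw [Finset.sum_insert (by simp [Finset.singleton_inj, h01, h02, hne_sing_trip a0]),
      Finset.sum_insert (by simp [Finset.singleton_inj, h12, hne_sing_trip a1]),
      Finset.sum_insert (by simp [hne_sing_trip a2]), Finset.sum_singleton]
    rw [Finset.prod_singleton, Finset.prod_singleton, Finset.prod_singleton,
      Finset.prod_insert (by simp [h01, h02]), Finset.prod_insert (by simp [h12]),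
      Finset.prod_singleton, hc012, Finset.card_singleton, hx0, hx1, hx2]
    norm_num [Nat.factorial]
  -- main estimate
  have hmain : ∑ e ∈ (({{a0},{a1},{a2},{a0,a1,a2}} : Finset (Finset (Fin n)))
      ∪ A.image (fun v => {a0,a1,v}) ∪ A.image (fun v => {a0,a2,v})
      ∪ A.image (fun v => {a1,a2,v})), ((Nat.factorial e.card : ℝ) * ∏ i ∈ e, x i)
      ≤ lagPoly E x := by
    apply Finset.sum_le_sum_of_subset_of_nonneg hsub
    intro e _ _
    exact mul_nonneg (by positivity) (Finset.prod_nonneg fun i _ => hx_nn i)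
  have hd0112 : Disjoint (A.image (fun v => ({a0,a1,v} : Finset (Fin n))))
      (A.image (fun v => ({a1,a2,v} : Finset (Fin n)))) :=
    hdimg a0 a1 a1 a2 a0 (by omega) h01 h02 (fun v hv => by simp)
  have hd0212 : Disjoint (A.image (fun v => ({a0,a2,v} : Finset (Fin n))))
      (A.image (fun v => ({a1,a2,v} : Finset (Fin n)))) :=
    hdimg a0 a2 a1 a2 a0 (by omega) h01 h02 (fun v hv => by simp)
  have hd0102 : Disjoint (A.image (fun v => ({a0,a1,v} : Finset (Fin n))))
      (A.image (fun v => ({a0,a2,v} : Finset (Fin n)))) :=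
    hdimg a0 a1 a0 a2 a1 (by omega) (Ne.symm h01) h12 (fun v hv => by simp)
  rw [Finset.sum_union (by
        rw [Finset.disjoint_union_left, Finset.disjoint_union_left]
        exact ⟨⟨hdBimg a1 a2, hd0112⟩, hd0212⟩),
      Finset.sum_union (by
        rw [Finset.disjoint_union_left]
        exact ⟨hdBimg a0 a2, hd0102⟩),
      Finset.sum_union (hdBimg a0 a1), hBsum,
      htripsum a0 a1 h01 (fun v hv => ⟨(hvA v hv).1, (hvA v hv).2.1⟩) hx0 hx1,
      htripsum a0 a2 h02 (fun v hv => ⟨(hvA v hv).1, (hvA v hv).2.2⟩) hx0 hx2,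
      htripsum a1 a2 h12 (fun v hv => ⟨(hvA v hv).2.1, (hvA v hv).2.2⟩) hx1 hx2] at hmain
  have hcast : ((s - 3 : ℕ) : ℝ) = (s : ℝ) - 3 := by
    rw [Nat.cast_sub (by omega)]; norm_num
  have hc : ((s - 3 : ℕ) : ℝ) * (6 * (0.333 * (0.333 * ((0.001 : ℝ) / ((s : ℝ) - 3)))))
      = 6 * (0.333 * (0.333 * 0.001)) := by
    rw [hcast]
    field_simp
  rw [hc] at hmain
  refine lt_of_lt_of_le ?_ hmain
  norm_num

/-- The counterexample for t = 3: a {1,3}-graph with exactly the singletons {1},{2},{3} and all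
3-subsets of [s] as 3-edges has Lagrangian exceeding λ'(K_3^{1,3}) = 1 + 2/9. -/
theorem counterexample_t_three (s n : ℕ) (hs : 4 ≤ s) (hn : s ≤ n)
    (E : Finset (Finset (Fin n)))
    (hR : E.image Finset.card = ({1, 3} : Finset ℕ))
    (h1 : E.filter (fun e => e.card = 1) =
      ({{⟨0, by omega⟩}, {⟨1, by omega⟩}, {⟨2, by omega⟩}} : Finset (Finset (Fin n))))
    (h3 : ∀ e : Finset (Fin n), e.card = 3 → (∀ v ∈ e, (v : ℕ) < s) → e ∈ E) :
    lagrangian E > 1 + 2 / 9 ∧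
    lagrangian (completeEdges 3 ({1, 3} : Finset ℕ)) = 1 + 2 / 9 ∧
    isLegal (fun v : Fin n => if (v : ℕ) < 3 then (0.333 : ℝ)
      else if (v : ℕ) < s then (0.001 : ℝ) / ((s : ℝ) - 3) else 0) ∧
    lagPoly E (fun v : Fin n => if (v : ℕ) < 3 then (0.333 : ℝ)
        else if (v : ℕ) < s then (0.001 : ℝ) / ((s : ℝ) - 3) else 0) > 1 + 2 / 9 := by
  
  have hgt := key_bound s n hs hn E h1 h3
  have hnn : ∀ v : Fin n, 0 ≤ (fun v : Fin n => if (v : ℕ) < 3 then (0.333 : ℝ)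
      else if (v : ℕ) < s then (0.001 : ℝ) / ((s : ℝ) - 3) else 0) v := by
    intro v; dsimp only
    have hs3 : (0:ℝ) < (s:ℝ) - 3 := by
      have : (4:ℝ) ≤ (s:ℝ) := by exact_mod_cast hs
      linarith
    split_ifs
    · norm_num
    · positivity
    · norm_num
  have hleg : isLegal (fun v : Fin n => if (v : ℕ) < 3 then (0.333 : ℝ)
      else if (v : ℕ) < s then (0.001 : ℝ) / ((s : ℝ) - 3) else 0) :=
    ⟨legal_sum s n hs hn, hnn⟩
  exact ⟨lt_of_lt_of_le hgt (lag_le E _ hleg), K3lag, hleg, hgt⟩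
end

section
/- Let r ≥ 3 be an integer and let x, y be real numbers with y ≥ 0 and x + y < 1. If x ≥ 1/( r(r-1)·(1-x-y)^{r-2} ) + y, then x ≥ (r(r-1))^{r-3} / (r(r-1) - 1)^{r-2}. -/
/-- The arithmetic step in the proof of Theorem 6: from the key inequality one deduces the lower
bound x ≥ (r(r-1))^{r-3} / (r(r-1)-1)^{r-2}. -/
theorem key_inequality_general (r : ℕ) (hr : 3 ≤ r) (x y : ℝ) (hy : 0 ≤ y) (hxy : x + y < 1)
    (h : 1 / ((r : ℝ) * ((r : ℝ) - 1) * (1 - x - y) ^ (r - 2)) + y ≤ x) :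
    ((r : ℝ) * ((r : ℝ) - 1)) ^ (r - 3) / ((r : ℝ) * ((r : ℝ) - 1) - 1) ^ (r - 2) ≤ x := by
  have hr3 : (3 : ℝ) ≤ (r : ℝ) := by exact_mod_cast hr
  set R : ℝ := (r : ℝ) * ((r : ℝ) - 1) with hRdef
  have hR6 : 6 ≤ R := by nlinarith
  have hu0 : 0 < 1 - x - y := by linarith
  have hupw : 0 < (1 - x - y) ^ (r - 2) := pow_pos hu0 _
  have hRu : 0 < R * (1 - x - y) ^ (r - 2) := by positivity
  have hxlow : 1 / (R * (1 - x - y) ^ (r - 2)) ≤ x := by linarith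
  have hx0 : 0 < x := lt_of_lt_of_le (by positivity) hxlow
  have huk1 : (1 - x - y) ^ (r - 2) ≤ 1 := pow_le_one₀ hu0.le (by linarith)
  have hxR : 1 / R ≤ x := le_trans (by
    apply one_div_le_one_div_of_le hRu
    nlinarith) hxlow
  have hdivR : (R - 1) / R = 1 - 1 / R := by field_simp
  have huB : 1 - x - y ≤ (R - 1) / R := by rw [hdivR]; linarith
  have hukB : (1 - x - y) ^ (r - 2) ≤ ((R - 1) / R) ^ (r - 2) :=
    pow_le_pow_left₀ hu0.le huB _
  have hRpos : (0:ℝ) < R := by linarith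
  have hR1 : (0:ℝ) < R - 1 := by linarith
  have hkey : R * ((R - 1) / R) ^ (r - 2) = (R - 1) ^ (r - 2) / R ^ (r - 3) := by
    have he : r - 2 = (r - 3) + 1 := by omega
    rw [div_pow, he, pow_succ]
    field_simp
    ring
  have hbig : R * (1 - x - y) ^ (r - 2) ≤ (R - 1) ^ (r - 2) / R ^ (r - 3) := by
    rw [← hkey]
    exact mul_le_mul_of_nonneg_left hukB hRpos.le
  have : R ^ (r - 3) / (R - 1) ^ (r - 2) ≤ 1 / (R * (1 - x - y) ^ (r - 2)) := by
    rw [div_le_div_iff₀ (by positivity) hRu]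
    calc R ^ (r - 3) * (R * (1 - x - y) ^ (r - 2))
        ≤ R ^ (r - 3) * ((R - 1) ^ (r - 2) / R ^ (r - 3)) := by
          gcongr
      _ = 1 * (R - 1) ^ (r - 2) := by field_simp
  linarith
end
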